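/- Let G be a connected graph with at least t+2 vertices and minimum degree at least t. Then for every vertex v of G, either there is a path on at least t+2 vertices starting at v, or v is a cut vertex of G lying in a block of G that is a clique on t+1 vertices. -/

import Mathlib

open SimpleGraph

/-- `v` is a cut vertex of `G`: removing it disconnects the rest of the graph. -/
def IsCutVertex {V : Type*} (G : SimpleGraph V) (v : V) : Prop :=
  ¬ (G.induce ({v}ᶜ : Set V)).Preconnected

/-- The set `B` induces a block of `G`: a maximal connected induced subgraph with
no cut vertex of itself. -/
def IsBlock {V : Type*} (G : SimpleGraph V) (B : Set V) : Prop :=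
  B.Nonempty ∧ (G.induce B).Connected ∧
    (∀ v ∈ B, (G.induce (B \ {v})).Preconnected) ∧
    ∀ C : Set V, B ⊆ C → C.Nonempty → (G.induce C).Connected →
      (∀ v ∈ C, (G.induce (C \ {v})).Preconnected) → C ⊆ B

lemma endpoint_sat {V : Type*} [Fintype V] [DecidableEq V]
    (G : SimpleGraph V) [DecidableRel G.Adj] {t : ℕ}
    (hdeg : ∀ x : V, t ≤ G.degree x) {v u : V} {q : G.Walk v u} (hq : q.IsPath)
    (hmax : ∀ (x : V) (r : G.Walk v x), r.IsPath → r.support.length ≤ q.support.length)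
    (hle : q.support.length ≤ t + 1) :
    G.neighborFinset u = q.support.toFinset.erase u ∧ q.support.length = t + 1 := by
  have hsub : G.neighborFinset u ⊆ q.support.toFinset.erase u := by
    intro y hy
    rw [SimpleGraph.mem_neighborFinset] at hy
    rw [Finset.mem_erase, List.mem_toFinset]
    refine ⟨hy.ne', ?_⟩
    by_contra hys
    have hpath : (q.concat hy).IsPath := by
      rw [Walk.isPath_def, Walk.support_concat, List.nodup_append]
      refine ⟨hq.support_nodup, List.nodup_singleton _, ?_⟩
      intro a ha b hb hab
      simp only [List.mem_singleton] at hb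
      subst hb; subst hab; exact hys ha
    have := hmax _ _ hpath
    rw [Walk.support_concat, List.length_append, List.length_singleton] at this
    omega
  have hnodup := hq.support_nodup
  have hcard : q.support.toFinset.card = q.support.length :=
    List.toFinset_card_of_nodup hnodup
  have hu : u ∈ q.support.toFinset := by
    rw [List.mem_toFinset]; exact q.end_mem_support
  have h1 : (q.support.toFinset.erase u).card = q.support.length - 1 := by
    rw [Finset.card_erase_of_mem hu, hcard]
  have h2 : G.degree u ≤ q.support.length - 1 := by
    rw [SimpleGraph.degree, ← h1]; exact Finset.card_le_card hsub
  have h3 := hdeg u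
  have h4 : 1 ≤ q.support.length := by
    have := q.support_ne_nil
    cases h : q.support with
    | nil => exact absurd h this
    | cons a l => simp [h]
  have hlen : q.support.length = t + 1 := by omega
  refine ⟨Finset.eq_of_subset_of_card_le hsub ?_, hlen⟩
  have h5 : G.degree u = (G.neighborFinset u).card := rfl
  rw [h1]; omega

lemma rotate_path {V : Type*} [DecidableEq V] {G : SimpleGraph V} {v w : V}
    {p : G.Walk v w} (hp : p.IsPath)
    (hadj : ∀ x ∈ p.support, x ≠ w → G.Adj w x) {u : V}
    (hu : u ∈ p.support) (huv : u ≠ v) :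
    ∃ q : G.Walk v u, q.IsPath ∧ q.support.Perm p.support := by
  have hspec := p.take_spec hu
  set q₁ := p.takeUntil u hu with hq₁
  set q₂ := p.dropUntil u hu with hq₂
  have hnn : ¬ q₁.reverse.Nil := Walk.not_nil_of_ne huv
  obtain ⟨x, hux, s, hs⟩ := Walk.not_nil_iff.mp hnn
  have hq1 : q₁ = s.reverse.concat hux.symm := by
    have := congrArg Walk.reverse hs
    simpa [Walk.reverse_cons, Walk.concat_eq_append] using this
  have hps : p = s.reverse.append (Walk.cons hux.symm q₂) := by
    rw [← hspec, hq1, Walk.concat_append]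
  have hsupp : p.support = s.reverse.support ++ q₂.support := by
    rw [hps, Walk.support_append, Walk.support_cons, List.tail_cons]
  have hxsupp : x ∈ p.support := by
    rw [hsupp]
    exact List.mem_append_left _ s.reverse.end_mem_support
  have hxw : x ≠ w := by
    intro h
    have hnd : p.support.Nodup := hp.support_nodup
    rw [hsupp] at hnd
    exact (List.disjoint_of_nodup_append hnd) (h ▸ s.reverse.end_mem_support)
      q₂.end_mem_support
  have hadjxw : G.Adj x w := (hadj x hxsupp hxw).symm
  refine ⟨s.reverse.append (Walk.cons hadjxw q₂.reverse), ?_, ?_⟩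
  · rw [Walk.isPath_def]
    refine (List.Perm.nodup_iff ?_).mp hp.support_nodup
    rw [hsupp, Walk.support_append, Walk.support_cons, List.tail_cons]
    simp only [Walk.support_reverse]
    exact (List.reverse_perm q₂.support).append_left _ |>.symm
  · rw [hsupp, Walk.support_append, Walk.support_cons, List.tail_cons]
    simp only [Walk.support_reverse]
    exact (List.reverse_perm q₂.support).append_left _

lemma walk_confined {V : Type*} {G : SimpleGraph V} {S T : Set V} {v : V}
    (hv : v ∉ T)
    (hcl : ∀ a ∈ S, a ≠ v → ∀ b, G.Adj a b → b ∈ S) :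
    ∀ {a b : T} (_ : (G.induce T).Walk a b), (a : V) ∈ S → (b : V) ∈ S := by
  intro a b w
  induction w with
  | nil => exact id
  | @cons x y z h q ih =>
      intro hx
      exact ih (hcl _ hx (fun he => hv (he ▸ x.2)) _ h)

/-- If `G` is connected with at least `t+2` vertices and minimum degree at least `t`,
then every vertex `v` starts a path on at least `t+2` vertices, unless `v` is a cut
vertex of `G` lying in a block which is a clique on `t+1` vertices. -/
theorem path_from_vertex_of_minDegree {V : Type*} [Fintype V] [DecidableEq V]
    (G : SimpleGraph V) [DecidableRel G.Adj] (t : ℕ)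
    (hconn : G.Connected) (hcard : t + 2 ≤ Fintype.card V)
    (hdeg : ∀ v : V, t ≤ G.degree v) (v : V) :
    (∃ (w : V) (p : G.Walk v w), p.IsPath ∧ t + 2 ≤ p.support.length) ∨
    (IsCutVertex G v ∧ ∃ B : Set V, IsBlock G B ∧ v ∈ B ∧ G.IsClique B ∧
      B.ncard = t + 1) := by
  classical
  -- pick a path from `v` of maximal support length
  have : Nonempty (Σ w : V, G.Path v w) := ⟨⟨v, ⟨Walk.nil, Walk.IsPath.nil⟩⟩⟩
  obtain ⟨⟨w, p, hp⟩, hmax'⟩ :=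
    Finite.exists_max (fun x : Σ w : V, G.Path v w => x.2.1.support.length)
  have hmax : ∀ (x : V) (r : G.Walk v x), r.IsPath → r.support.length ≤ p.support.length :=
    fun x r hr => hmax' ⟨x, ⟨r, hr⟩⟩
  by_cases hbig : t + 2 ≤ p.support.length
  · exact Or.inl ⟨w, p, hp, hbig⟩
  right
  have hle : p.support.length ≤ t + 1 := by omega
  obtain ⟨hnbw, hlen⟩ := endpoint_sat G hdeg hp hmax hle
  -- `t ≥ 1`
  have htpos : 1 ≤ t := by
    by_contra ht
    have ht0 : t = 0 := by omega
    obtain ⟨u, hu⟩ := Fintype.exists_ne_of_one_lt_card (by omega : 1 < Fintype.card V) v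
    obtain ⟨r⟩ := hconn.preconnected v u
    have h2 : 2 ≤ (r.toPath : G.Walk v u).support.length := by
      rcases r.toPath with ⟨q, hq⟩
      cases q with
      | nil => exact absurd rfl hu.symm
      | cons h s =>
          have := s.support_ne_nil
          simp only [Walk.support_cons, List.length_cons]
          cases h : s.support with
          | nil => exact absurd h this
          | cons a l => simp [h]
    have := hmax _ _ (r.toPath).2
    omega
  -- `w ≠ v`
  have hwv : w ≠ v := by
    intro h
    subst h
    cases hc : p with
    | nil => rw [hc] at hlen; simp [Walk.support_nil] at hlen; omega
    | cons hadj s =>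
        have hnd := hp.support_nodup
        rw [hc, Walk.support_cons] at hnd
        exact (List.nodup_cons.mp hnd).1 s.end_mem_support
  -- `w` is adjacent to every other vertex of the support
  have hadjw : ∀ x ∈ p.support, x ≠ w → G.Adj w x := by
    intro x hx hxw
    rw [← SimpleGraph.mem_neighborFinset, hnbw, Finset.mem_erase, List.mem_toFinset]
    exact ⟨hxw, hx⟩
  -- key: every non-`v` support vertex has its neighborhood equal to the rest of the support
  have hK : ∀ a ∈ p.support, a ≠ v →
      G.neighborFinset a = p.support.toFinset.erase a := by
    intro a ha hav
    obtain ⟨q, hq, hperm⟩ := rotate_path hp hadjw ha hav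
    have hqlen : q.support.length = p.support.length := hperm.length_eq
    have hqmax : ∀ (x : V) (r : G.Walk v x), r.IsPath → r.support.length ≤ q.support.length :=
      fun x r hr => hqlen ▸ hmax x r hr
    obtain ⟨h1, _⟩ := endpoint_sat G hdeg hq hqmax (hqlen ▸ hle)
    rw [h1, List.toFinset_eq_of_perm _ _ hperm]
  set S : Set V := ↑p.support.toFinset with hS
  have hmemS : ∀ x, x ∈ S ↔ x ∈ p.support := by
    intro x; simp [hS]
  have hvS : v ∈ S := (hmemS v).mpr p.start_mem_support
  have hwS : w ∈ S := (hmemS w).mpr p.end_mem_support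
  -- closure property
  have hcl : ∀ a ∈ S, a ≠ v → ∀ b, G.Adj a b → b ∈ S := by
    intro a ha hav b hab
    have := hK a ((hmemS a).mp ha) hav
    have hb : b ∈ G.neighborFinset a := by rwa [SimpleGraph.mem_neighborFinset]
    rw [this, Finset.mem_erase, List.mem_toFinset] at hb
    exact (hmemS b).mpr hb.2
  -- clique
  have hclique : G.IsClique S := by
    intro a ha b hb hab
    rcases eq_or_ne b v with rfl | hbv
    · have := hK a ((hmemS a).mp ha) hab
      have : b ∈ G.neighborFinset a := by
        rw [this, Finset.mem_erase, List.mem_toFinset]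
        exact ⟨hab.symm, (hmemS b).mp hb⟩
      rwa [SimpleGraph.mem_neighborFinset] at this
    · have := hK b ((hmemS b).mp hb) hbv
      have : a ∈ G.neighborFinset b := by
        rw [this, Finset.mem_erase, List.mem_toFinset]
        exact ⟨hab, (hmemS a).mp ha⟩
      rw [SimpleGraph.mem_neighborFinset] at this
      exact this.symm
  -- cardinality
  have hScard : S.ncard = t + 1 := by
    rw [hS, Set.ncard_coe_finset, List.toFinset_card_of_nodup hp.support_nodup, hlen]
  -- a vertex outside S
  obtain ⟨y, hyS⟩ : ∃ y, y ∉ S := by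
    by_contra h
    push_neg at h
    have : (Finset.univ : Finset V) ⊆ p.support.toFinset := fun x _ => by
      simpa [hS] using h x
    have := Finset.card_le_card this
    rw [List.toFinset_card_of_nodup hp.support_nodup, hlen, Finset.card_univ] at this
    omega
  have hyv : y ≠ v := fun h => hyS (h ▸ hvS)
  -- v is a cut vertex
  have hcut : IsCutVertex G v := by
    intro hpre
    obtain ⟨r⟩ := hpre ⟨w, by simpa using hwv⟩ ⟨y, by simpa using hyv⟩
    exact hyS (walk_confined (by simp) hcl r hwS)
  refine ⟨hcut, S, ⟨⟨v, hvS⟩, ?_, ?_, ?_⟩, hvS, hclique, hScard⟩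
  · -- induce S connected
    haveI : Nonempty (S : Set V) := ⟨⟨v, hvS⟩⟩
    refine ⟨fun a b => ?_⟩
    rcases eq_or_ne a b with rfl | hab
    · exact Reachable.refl _
    · have : G.Adj (a : V) (b : V) := hclique a.2 b.2 (fun h => hab (Subtype.ext h))
      exact (SimpleGraph.Adj.reachable (by exact this))
  · -- no cut vertex inside S
    intro u _ a b
    rcases eq_or_ne a b with rfl | hab
    · exact Reachable.refl _
    · have : G.Adj (a : V) (b : V) := hclique a.2.1 b.2.1 (fun h => hab (Subtype.ext h))
      exact (SimpleGraph.Adj.reachable (by exact this))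
  · -- maximality
    intro C hSC _ _ hCnocut x hxC
    by_contra hxS
    have hxv : x ≠ v := fun h => hxS (h ▸ hvS)
    have hpre := hCnocut v (hSC hvS)
    obtain ⟨r⟩ := hpre ⟨w, ⟨hSC hwS, by simpa using hwv⟩⟩ ⟨x, ⟨hxC, by simpa using hxv⟩⟩
    exact hxS (walk_confined (by simp) hcl r hwS)
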